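/- Let Q be an abstract polytope of rank ≥ 0 that is prime with respect to the join, let m ≥ 1, and let P = Q * ⋯ * Q be the m-fold join of Q with itself. Then Aut(P) is isomorphic as a group to the semidirect product (∏_{i=1}^m Aut(Q)) ⋊ Sym(m), where the symmetric group Sym(m) acts on the direct product of m copies of Aut(Q) by permuting the coordinates (the wreath product Aut(Q) ≀ Sym(m)). -/

import Mathlib

universe u v

/-- An abstract polytope of rank `n ≥ -1`: a partial order with a least element (the `⊥` of the
`OrderBot` instance) and a greatest element, in which every maximal chain has exactly `n + 2`
elements, every interval admitting a maximal chain of at least 4 elements is connected, and the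
diamond condition holds. -/
structure IsAbstractPolytope (P : Type u) [PartialOrder P] [OrderBot P] (n : ℤ) : Prop where
  neg_one_le : -1 ≤ n
  exists_top : ∃ t : P, IsTop t
  maxChain_card : ∀ s : Set P, IsMaxChain (· ≤ ·) s → s.ncard = (n + 2).toNat
  connected : ∀ x z : P, x ≤ z →
      (∃ c : Set (Set.Icc x z), IsMaxChain (· ≤ ·) c ∧ 4 ≤ c.ncard) →
      ∀ F G : Set.Icc x z, (F : P) ≠ x → (F : P) ≠ z → (G : P) ≠ x → (G : P) ≠ z →
        Relation.ReflTransGen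
          (fun a b : Set.Icc x z =>
            ((a : P) ≠ x ∧ (a : P) ≠ z ∧ (b : P) ≠ x ∧ (b : P) ≠ z) ∧
              ((a : P) ≤ (b : P) ∨ (b : P) ≤ (a : P))) F G
  diamond : ∀ x z : P, x < z →
      (∀ c : Set (Set.Icc x z), IsMaxChain (· ≤ ·) c → c.ncard = 4) →
      {y : P | x < y ∧ y < z}.ncard = 2

/-- `x` has rank `k` if every maximal chain of the interval `[⊥, x] = Set.Iic x`
has exactly `k + 2` elements. -/
def HasRank {P : Type u} [PartialOrder P] [OrderBot P] (x : P) (k : ℤ) : Prop :=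
  ∀ c : Set (Set.Iic x), IsMaxChain (· ≤ ·) c → c.ncard = (k + 2).toNat

/-- The Cartesian product `P ×c Q` of two bounded posets: the subposet of `P × Q`
consisting of `(⊥, ⊥)` together with all pairs with both entries different from `⊥`.
(The join `P * Q` is just `P × Q` with the componentwise order.) -/
abbrev CartProd (P : Type u) (Q : Type v) [PartialOrder P] [OrderBot P]
    [PartialOrder Q] [OrderBot Q] : Type (max u v) :=
  {x : P × Q // x = (⊥, ⊥) ∨ (x.1 ≠ ⊥ ∧ x.2 ≠ ⊥)}

instance CartProd.instOrderBot (P : Type u) (Q : Type v) [PartialOrder P] [OrderBot P]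
    [PartialOrder Q] [OrderBot Q] : OrderBot (CartProd P Q) where
  bot := ⟨(⊥, ⊥), Or.inl rfl⟩
  bot_le x := show ((⊥, ⊥) : P × Q) ≤ x.val from bot_le

/-- The iterated Cartesian product of a family of bounded posets: tuples which are either
everywhere `⊥` or nowhere `⊥`. -/
abbrev CartPi {ι : Type v} (Q : ι → Type u) [∀ i, PartialOrder (Q i)] [∀ i, OrderBot (Q i)] :
    Type (max u v) :=
  {f : (i : ι) → Q i // (∀ i, f i = ⊥) ∨ (∀ i, f i ≠ ⊥)}

instance CartPi.instOrderBot {ι : Type v} (Q : ι → Type u) [∀ i, PartialOrder (Q i)]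
    [∀ i, OrderBot (Q i)] : OrderBot (CartPi Q) where
  bot := ⟨fun _ => ⊥, Or.inl fun _ => rfl⟩
  bot_le f := show (fun _ => ⊥) ≤ f.val from bot_le

/-- The `k`-fold Cartesian product of a bounded poset with itself. -/
abbrev CartPow (P : Type u) [PartialOrder P] [OrderBot P] (k : ℕ) : Type u :=
  CartPi (fun _ : Fin k => P)

/-- A bundled poset with a least element. -/
structure BddPoset : Type (u + 1) where
  carrier : Type u
  [po : PartialOrder carrier]
  [ob : OrderBot carrier]

attribute [instance] BddPoset.po BddPoset.ob

instance : CoeSort BddPoset.{u} (Type u) := ⟨BddPoset.carrier⟩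

/-- Prime with respect to the join: not order-isomorphic to a join `A * B = A × B` of two
abstract polytopes of rank at least `0`. -/
def JoinPrime (X : Type u) [PartialOrder X] [OrderBot X] : Prop :=
  ¬ ∃ (A B : BddPoset.{u}) (a b : ℤ), 0 ≤ a ∧ 0 ≤ b ∧
      IsAbstractPolytope A.carrier a ∧ IsAbstractPolytope B.carrier b ∧
      Nonempty (X ≃o (A.carrier × B.carrier))

/-- Prime with respect to the Cartesian product: not order-isomorphic to a Cartesian product
of two abstract polytopes of rank at least `1`. -/
def CartPrime (X : Type u) [PartialOrder X] [OrderBot X] : Prop :=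
  ¬ ∃ (A B : BddPoset.{u}) (a b : ℤ), 1 ≤ a ∧ 1 ≤ b ∧
      IsAbstractPolytope A.carrier a ∧ IsAbstractPolytope B.carrier b ∧
      Nonempty (X ≃o CartProd A.carrier B.carrier)

/-- `R` is a factor of `X` with respect to the join. -/
def JoinFactor (R : BddPoset.{u}) (X : Type u) [PartialOrder X] [OrderBot X] : Prop :=
  ∃ S : BddPoset.{u}, (∃ s : ℤ, IsAbstractPolytope S.carrier s) ∧
    Nonempty (X ≃o (R.carrier × S.carrier))

/-- `R` is a factor of `X` with respect to the Cartesian product. -/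
def CartFactor (R : BddPoset.{u}) (X : Type u) [PartialOrder X] [OrderBot X] : Prop :=
  ∃ S : BddPoset.{u}, (∃ s : ℤ, IsAbstractPolytope S.carrier s) ∧
    Nonempty (X ≃o CartProd R.carrier S.carrier)

/-- Relatively prime with respect to the join: no join-prime abstract polytope of rank `≥ 0` is a
join-factor of both. -/
def JoinRelPrime (X : Type u) [PartialOrder X] [OrderBot X]
    (Y : Type u) [PartialOrder Y] [OrderBot Y] : Prop :=
  ¬ ∃ R : BddPoset.{u}, (∃ r : ℤ, 0 ≤ r ∧ IsAbstractPolytope R.carrier r) ∧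
      JoinPrime R.carrier ∧ JoinFactor R X ∧ JoinFactor R Y

/-- Relatively prime with respect to the Cartesian product. -/
def CartRelPrime (X : Type u) [PartialOrder X] [OrderBot X]
    (Y : Type u) [PartialOrder Y] [OrderBot Y] : Prop :=
  ¬ ∃ R : BddPoset.{u}, (∃ r : ℤ, 1 ≤ r ∧ IsAbstractPolytope R.carrier r) ∧
      CartPrime R.carrier ∧ CartFactor R X ∧ CartFactor R Y

/-- A pyramid: order-isomorphic to `Q * pt` for some abstract polytope `Q`, where
`pt = Bool` is the two-element chain. -/
def IsPyramid (X : Type u) [PartialOrder X] [OrderBot X] : Prop :=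
  ∃ Q : BddPoset.{u}, (∃ q : ℤ, IsAbstractPolytope Q.carrier q) ∧
    Nonempty (X ≃o (Q.carrier × Bool))

/-- A prism: order-isomorphic to `Q ×c I` for some abstract polytope `Q`, where
`I = Bool × Bool` is the four-element rank-one polytope. -/
def IsPrism (X : Type u) [PartialOrder X] [OrderBot X] : Prop :=
  ∃ Q : BddPoset.{u}, (∃ q : ℤ, IsAbstractPolytope Q.carrier q) ∧
    Nonempty (X ≃o CartProd Q.carrier (Bool × Bool))

/-- The homomorphism from `Equiv.Perm ι` to automorphisms of `ι → G` permuting the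
coordinates: `σ` sends `v` to `v ∘ σ⁻¹`. -/
def permHom (ι : Type v) (G : Type u) [Group G] : Equiv.Perm ι →* MulAut (ι → G) where
  toFun σ :=
    { toFun := fun v => v ∘ σ.symm
      invFun := fun v => v ∘ σ
      left_inv := fun v => by funext i; simp
      right_inv := fun v => by funext i; simp
      map_mul' := fun v w => rfl }
  map_one' := by apply MulEquiv.ext; intro v; funext i; rfl
  map_mul' σ τ := by apply MulEquiv.ext; intro v; funext i; rfl


section Chains

variable {α : Type*} {β : Type*} [PartialOrder α] [PartialOrder β]

/-- A maximal chain within the subset `s`. -/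
def MaxChainOn (s C : Set α) : Prop :=
  C ⊆ s ∧ IsChain (· ≤ ·) C ∧ ∀ u ∈ s, (∀ v ∈ C, u ≤ v ∨ v ≤ u) → u ∈ C

theorem maxChainOn_univ_iff {C : Set α} :
    MaxChainOn Set.univ C ↔ IsMaxChain (· ≤ ·) C := by
  constructor
  · rintro ⟨-, hc, hmax⟩
    refine ⟨hc, fun t ht hst => ?_⟩
    refine le_antisymm hst (fun u hu => hmax u trivial fun v hv => ?_)
    rcases eq_or_ne u v with rfl | hne
    · exact Or.inl le_rfl
    · exact ht hu (hst hv) hne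
  · rintro ⟨hc, hmax⟩
    refine ⟨Set.subset_univ _, hc, fun u _ hcomp => ?_⟩
    have : C = insert u C := hmax (hc.insert (fun b hb _ => (hcomp b hb))) (Set.subset_insert _ _)
    rw [this]; exact Set.mem_insert _ _

theorem isMaxChain_image (e : α ≃o β) {C : Set α} (hC : IsMaxChain (· ≤ ·) C) :
    IsMaxChain (· ≤ ·) ((e : α → β) '' C) := by
  obtain ⟨hc, hmax⟩ := hC
  constructor
  · rintro _ ⟨a, ha, rfl⟩ _ ⟨b, hb, rfl⟩ hne
    have hab : a ≠ b := fun h => hne (by rw [h])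
    rcases hc ha hb hab with h | h
    · exact Or.inl (e.monotone h)
    · exact Or.inr (e.monotone h)
  · intro t ht hsub
    have h1 : IsChain (· ≤ ·) ((e.symm : β → α) '' t) := by
      rintro _ ⟨a, ha, rfl⟩ _ ⟨b, hb, rfl⟩ hne
      have hab : a ≠ b := fun h => hne (by rw [h])
      rcases ht ha hb hab with h | h
      · exact Or.inl (e.symm.monotone h)
      · exact Or.inr (e.symm.monotone h)
    have h2 : C ⊆ (e.symm : β → α) '' t := by
      intro a ha
      exact ⟨e a, hsub ⟨a, ha, rfl⟩, e.symm_apply_apply a⟩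
    have h3 := hmax h1 h2
    rw [h3, Set.image_image]
    simp only [OrderIso.apply_symm_apply, Set.image_id']

theorem ncard_image_orderIso (e : α ≃o β) (C : Set α) :
    ((e : α → β) '' C).ncard = C.ncard :=
  Set.ncard_image_of_injective _ e.injective

/-- Translation between maximal chains of the subtype `↥s` and maximal chains on `s`. -/
theorem isMaxChain_subtype_iff {s : Set α} {c : Set ↥s} :
    IsMaxChain (· ≤ ·) c ↔ MaxChainOn s (Subtype.val '' c) := by
  constructor
  · rintro ⟨hc, hmax⟩
    refine ⟨?_, ?_, ?_⟩
    · rintro _ ⟨a, _, rfl⟩; exact a.2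
    · rintro _ ⟨a, ha, rfl⟩ _ ⟨b, hb, rfl⟩ hne
      have hab : a ≠ b := fun h => hne (by rw [h])
      exact hc ha hb hab
    · intro u hu hcomp
      have : c = insert ⟨u, hu⟩ c := by
        refine hmax (hc.insert fun b hb hne => ?_) (Set.subset_insert _ _)
        exact hcomp b.1 ⟨b, hb, rfl⟩
      have : (⟨u, hu⟩ : ↥s) ∈ c := by rw [this]; exact Set.mem_insert _ _
      exact ⟨⟨u, hu⟩, this, rfl⟩
  · rintro ⟨hsub, hc, hmax⟩
    constructor
    · intro a ha b hb hne
      have : (a : α) ≠ b := fun h => hne (Subtype.ext h)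
      exact hc ⟨a, ha, rfl⟩ ⟨b, hb, rfl⟩ this
    · intro t ht hsub'
      refine le_antisymm hsub' (fun x hx => ?_)
      have : (x : α) ∈ Subtype.val '' c := by
        refine hmax x.1 x.2 fun v hv => ?_
        obtain ⟨y, hy, rfl⟩ := hv
        rcases eq_or_ne x y with rfl | hne
        · exact Or.inl le_rfl
        · exact ht hx (hsub' hy) hne
      obtain ⟨y, hy, hxy⟩ := this
      rwa [show x = y from Subtype.ext hxy.symm]

theorem exists_maxChainOn {s C : Set α} (hC : IsChain (· ≤ ·) C) (hCs : C ⊆ s) :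
    ∃ D, MaxChainOn s D ∧ C ⊆ D := by
  set c : Set ↥s := {x | (x : α) ∈ C} with hc
  have hcc : IsChain (· ≤ ·) c := by
    intro a ha b hb hne
    exact hC ha hb fun h => hne (Subtype.ext h)
  obtain ⟨M, hM, hcM⟩ := hcc.exists_maxChain
  refine ⟨Subtype.val '' M, isMaxChain_subtype_iff.mp hM, ?_⟩
  intro x hx
  exact ⟨⟨x, hCs hx⟩, hcM hx, rfl⟩

theorem MaxChainOn.mem_of_forall {s C : Set α} (h : MaxChainOn s C) {u : α} (hu : u ∈ s)
    (hcomp : ∀ v ∈ C, u ≤ v ∨ v ≤ u) : u ∈ C := h.2.2 u hu hcomp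

theorem MaxChainOn.left_mem {x z : α} {C : Set α} (hxz : x ≤ z)
    (h : MaxChainOn (Set.Icc x z) C) : x ∈ C :=
  h.mem_of_forall ⟨le_rfl, hxz⟩ fun v hv => Or.inl (h.1 hv).1

theorem MaxChainOn.right_mem {x z : α} {C : Set α} (hxz : x ≤ z)
    (h : MaxChainOn (Set.Icc x z) C) : z ∈ C :=
  h.mem_of_forall ⟨hxz, le_rfl⟩ fun v hv => Or.inr (h.1 hv).2

theorem ncard_finite_of_pos {s : Set α} (h : s.ncard ≠ 0) : s.Finite := by
  by_contra hf
  rw [Set.Infinite.ncard (by simpa using hf)] at h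
  exact h rfl

end Chains
section Graded

variable {Q : Type*} [PartialOrder Q] [OrderBot Q] {n : ℤ}


theorem glue_maxChainOn {x z : Q} (hxz : x ≤ z) {D₁ C D₂ : Set Q}
    (h1 : MaxChainOn (Set.Iic x) D₁) (hC : MaxChainOn (Set.Icc x z) C)
    (h2 : MaxChainOn (Set.Ici z) D₂) : MaxChainOn Set.univ (D₁ ∪ C ∪ D₂) := by
  have hx1 : x ∈ D₁ := h1.mem_of_forall le_rfl fun v hv => Or.inr (h1.1 hv)
  have hxC : x ∈ C := hC.left_mem hxz
  have hzC : z ∈ C := hC.right_mem hxz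
  have hz2 : z ∈ D₂ := h2.mem_of_forall le_rfl fun v hv => Or.inl (h2.1 hv)
  have hle : ∀ a ∈ D₁ ∪ C ∪ D₂, ∀ b ∈ D₁ ∪ C ∪ D₂, a ∈ D₁ → b ∈ C ∪ D₂ → a ≤ b := by
    rintro a _ b _ ha hb
    rcases hb with hb | hb
    · exact le_trans (h1.1 ha) (hC.1 hb).1
    · exact le_trans (h1.1 ha) (le_trans hxz (h2.1 hb))
  refine ⟨Set.subset_univ _, ?_, ?_⟩
  · rintro a ha b hb hne
    rcases ha with (ha | ha) | ha <;> rcases hb with (hb | hb) | hb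
    · exact h1.2.1 ha hb hne
    · exact Or.inl (le_trans (h1.1 ha) (hC.1 hb).1)
    · exact Or.inl (le_trans (h1.1 ha) (le_trans hxz (h2.1 hb)))
    · exact Or.inr (le_trans (h1.1 hb) (hC.1 ha).1)
    · exact hC.2.1 ha hb hne
    · exact Or.inl (le_trans (hC.1 ha).2 (h2.1 hb))
    · exact Or.inr (le_trans (h1.1 hb) (le_trans hxz (h2.1 ha)))
    · exact Or.inr (le_trans (hC.1 hb).2 (h2.1 ha))
    · exact h2.2.1 ha hb hne
  · intro u _ hcomp
    have hux : u ≤ x ∨ x ≤ u := hcomp x (Or.inl (Or.inl hx1))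
    rcases hux with hux | hux
    · left; left
      exact h1.mem_of_forall hux fun v hv => hcomp v (Or.inl (Or.inl hv))
    · have huz : u ≤ z ∨ z ≤ u := hcomp z (Or.inr hz2)
      rcases huz with huz | huz
      · left; right
        exact hC.mem_of_forall ⟨hux, huz⟩ fun v hv => hcomp v (Or.inl (Or.inr hv))
      · right
        exact h2.mem_of_forall huz fun v hv => hcomp v (Or.inr hv)

theorem maxChainOn_Icc_self {x : Q} {C : Set Q} (h : MaxChainOn (Set.Icc x x) C) :
    C = {x} := by
  apply Set.eq_singleton_iff_unique_mem.mpr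
  refine ⟨h.left_mem le_rfl, fun y hy => ?_⟩
  have := h.1 hy
  simp only [Set.Icc_self, Set.mem_singleton_iff] at this
  exact this

variable (hQ : IsAbstractPolytope Q n) (hn : 0 ≤ n)
include hQ hn

theorem univ_card {C : Set Q} (h : MaxChainOn Set.univ C) : C.ncard = (n + 2).toNat :=
  hQ.maxChain_card C (maxChainOn_univ_iff.mp h)

theorem univ_finite {C : Set Q} (h : MaxChainOn Set.univ C) : C.Finite := by
  apply ncard_finite_of_pos
  rw [univ_card hQ hn h]
  omega

/-- Gradedness: any two maximal chains of an interval have the same cardinality. -/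
theorem graded {x z : Q} (hxz : x ≤ z) {C C' : Set Q}
    (h : MaxChainOn (Set.Icc x z) C) (h' : MaxChainOn (Set.Icc x z) C') :
    C.ncard = C'.ncard := by
  rcases eq_or_lt_of_le hxz with rfl | hlt
  · rw [maxChainOn_Icc_self h, maxChainOn_Icc_self h']
  obtain ⟨D₁, hD₁, -⟩ := exists_maxChainOn (Set.Subsingleton.isChain (by simp) :
    IsChain (· ≤ ·) (∅ : Set Q)) (Set.empty_subset (Set.Iic x))
  obtain ⟨D₂, hD₂, -⟩ := exists_maxChainOn (Set.Subsingleton.isChain (by simp) :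
    IsChain (· ≤ ·) (∅ : Set Q)) (Set.empty_subset (Set.Ici z))
  have key : ∀ B : Set Q, MaxChainOn (Set.Icc x z) B →
      (D₁ ∪ B ∪ D₂).ncard = D₁.ncard + (B.ncard - 1) + (D₂.ncard - 1) ∧
      (D₁ ∪ B ∪ D₂).ncard = (n+2).toNat ∧ 1 ≤ B.ncard ∧ 1 ≤ D₂.ncard := by
    intro B hB
    have hglue := glue_maxChainOn hxz hD₁ hB hD₂
    have hfin : (D₁ ∪ B ∪ D₂).Finite := univ_finite hQ hn hglue
    have hfD₁ : D₁.Finite := hfin.subset (fun a ha => Or.inl (Or.inl ha))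
    have hfB : B.Finite := hfin.subset (fun a ha => Or.inl (Or.inr ha))
    have hfD₂ : D₂.Finite := hfin.subset (fun a ha => Or.inr ha)
    have hx1 : x ∈ D₁ := hD₁.mem_of_forall le_rfl fun v hv => Or.inr (hD₁.1 hv)
    have hxB : x ∈ B := hB.left_mem hxz
    have hzB : z ∈ B := hB.right_mem hxz
    have hz2 : z ∈ D₂ := hD₂.mem_of_forall le_rfl fun v hv => Or.inl (hD₂.1 hv)
    have hU : D₁ ∪ B ∪ D₂ = D₁ ∪ ((B \ {x}) ∪ (D₂ \ {z})) := by
      ext a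
      simp only [Set.mem_union, Set.mem_diff, Set.mem_singleton_iff]
      constructor
      · rintro ((ha | ha) | ha)
        · exact Or.inl ha
        · rcases eq_or_ne a x with rfl | hne
          · exact Or.inl hx1
          · exact Or.inr (Or.inl ⟨ha, hne⟩)
        · rcases eq_or_ne a z with rfl | hne
          · exact Or.inr (Or.inl ⟨hzB, fun h => absurd h.symm (ne_of_lt hlt)⟩)
          · exact Or.inr (Or.inr ⟨ha, hne⟩)
      · rintro (ha | (⟨ha, -⟩ | ⟨ha, -⟩))
        · exact Or.inl (Or.inl ha)
        · exact Or.inl (Or.inr ha)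
        · exact Or.inr ha
    have hd1 : Disjoint (B \ {x}) (D₂ \ {z}) := by
      rw [Set.disjoint_left]
      rintro a ⟨haB, hax⟩ ⟨haD, haz⟩
      exact haz (le_antisymm ((hB.1 haB).2) (hD₂.1 haD))
    have hd2 : Disjoint D₁ ((B \ {x}) ∪ (D₂ \ {z})) := by
      rw [Set.disjoint_left]
      rintro a ha (⟨haB, hax⟩ | ⟨haD, haz⟩)
      · exact hax (le_antisymm (hD₁.1 ha) (hB.1 haB).1)
      · exact haz (le_antisymm (le_trans (hD₁.1 ha) hxz) (hD₂.1 haD))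
    have hcB : 1 ≤ B.ncard := by
      rw [Nat.one_le_iff_ne_zero]
      intro h0
      rw [(Set.ncard_eq_zero hfB).mp h0] at hxB
      exact hxB
    have hcD₂ : 1 ≤ D₂.ncard := by
      rw [Nat.one_le_iff_ne_zero]
      intro h0
      rw [(Set.ncard_eq_zero hfD₂).mp h0] at hz2
      exact hz2
    refine ⟨?_, univ_card hQ hn hglue, hcB, hcD₂⟩
    rw [hU, Set.ncard_union_eq hd2 hfD₁ (hfB.diff.union hfD₂.diff),
      Set.ncard_union_eq hd1 hfB.diff hfD₂.diff,
      Set.ncard_diff_singleton_of_mem hxB, Set.ncard_diff_singleton_of_mem hz2]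
    omega
  obtain ⟨e1, e2, hc1, -⟩ := key C h
  obtain ⟨e1', e2', hc1', -⟩ := key C' h'
  omega

theorem maxChainOn_Icc_card_le {x z : Q} (hxz : x ≤ z) {C : Set Q}
    (h : MaxChainOn (Set.Icc x z) C) : C.Finite ∧ C.ncard ≤ (n + 2).toNat := by
  obtain ⟨D₁, hD₁, -⟩ := exists_maxChainOn (Set.Subsingleton.isChain (by simp) :
    IsChain (· ≤ ·) (∅ : Set Q)) (Set.empty_subset (Set.Iic x))
  obtain ⟨D₂, hD₂, -⟩ := exists_maxChainOn (Set.Subsingleton.isChain (by simp) :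
    IsChain (· ≤ ·) (∅ : Set Q)) (Set.empty_subset (Set.Ici z))
  have hglue := glue_maxChainOn hxz hD₁ h hD₂
  have hfin := univ_finite hQ hn hglue
  have hsub : C ⊆ D₁ ∪ C ∪ D₂ := fun a ha => Or.inl (Or.inr ha)
  exact ⟨hfin.subset hsub, by
    rw [← univ_card hQ hn hglue]; exact Set.ncard_le_ncard hsub hfin⟩

end Graded
section Transfer

variable {α : Type*} {β : Type*} [PartialOrder α] [PartialOrder β]

/-- Interval of an `Iic`-subtype is isomorphic to the ambient interval. -/
def iccSub {q : α} (x z : ↥(Set.Iic q)) :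
    ↥(Set.Icc x z) ≃o ↥(Set.Icc (x : α) (z : α)) where
  toFun F := ⟨F.1.1, Subtype.coe_le_coe.mpr F.2.1, Subtype.coe_le_coe.mpr F.2.2⟩
  invFun y := ⟨⟨y.1, le_trans y.2.2 z.2⟩,
    ⟨Subtype.coe_le_coe.mp (by exact y.2.1), Subtype.coe_le_coe.mp (by exact y.2.2)⟩⟩
  left_inv F := by ext; rfl
  right_inv y := by ext; rfl
  map_rel_iff' := by
    intro F G
    simp only [Equiv.coe_fn_mk, Subtype.mk_le_mk]
    exact ⟨fun h => Subtype.coe_le_coe.mp (Subtype.coe_le_coe.mp (by exact h)),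
      fun h => Subtype.coe_le_coe.mpr (Subtype.coe_le_coe.mpr h)⟩

/-- Intervals correspond along an order isomorphism. -/
def iccCongr (e : α ≃o β) (x z : α) :
    ↥(Set.Icc x z) ≃o ↥(Set.Icc (e x) (e z)) where
  toFun F := ⟨e F.1, e.monotone F.2.1, e.monotone F.2.2⟩
  invFun G := ⟨e.symm G.1, by
    constructor
    · have := e.symm.monotone G.2.1; rwa [e.symm_apply_apply] at this
    · have := e.symm.monotone G.2.2; rwa [e.symm_apply_apply] at this⟩
  left_inv F := Subtype.ext (e.symm_apply_apply _)
  right_inv G := Subtype.ext (e.apply_symm_apply _)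
  map_rel_iff' := by
    intro F G
    simp only [Equiv.coe_fn_mk, Subtype.mk_le_mk, OrderIso.le_iff_le]
    exact ⟨fun h => (show (F : α) ≤ G from e.le_iff_le.mp (show e F.1 ≤ e G.1 from h)),
      fun h => (show e F.1 ≤ e G.1 from e.monotone (show F.1 ≤ G.1 from h))⟩

theorem iccIso_endpoints {x z : α} {x' z' : β} (hxz : x ≤ z) (h' : x' ≤ z')
    (E : ↥(Set.Icc x z) ≃o ↥(Set.Icc x' z')) :
    E ⟨x, le_rfl, hxz⟩ = ⟨x', le_rfl, h'⟩ ∧ E ⟨z, hxz, le_rfl⟩ = ⟨z', h', le_rfl⟩ := by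
  constructor
  · apply le_antisymm
    · have h1 : (⟨x, le_rfl, hxz⟩ : ↥(Set.Icc x z)) ≤ E.symm ⟨x', le_rfl, h'⟩ :=
        Subtype.coe_le_coe.mp (E.symm ⟨x', le_rfl, h'⟩).2.1
      have := E.monotone h1
      rwa [E.apply_symm_apply] at this
    · exact Subtype.coe_le_coe.mp (E ⟨x, le_rfl, hxz⟩).2.1
  · apply le_antisymm
    · exact Subtype.coe_le_coe.mp (E ⟨z, hxz, le_rfl⟩).2.2
    · have h1 : E.symm ⟨z', h', le_rfl⟩ ≤ (⟨z, hxz, le_rfl⟩ : ↥(Set.Icc x z)) :=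
        Subtype.coe_le_coe.mp (E.symm ⟨z', h', le_rfl⟩).2.2
      have := E.monotone h1
      rwa [E.apply_symm_apply] at this

/-- Master lemma: a bounded poset whose maximal chains all have the same cardinality, with a
top element, and all of whose intervals are isomorphic to intervals of an abstract polytope,
is itself an abstract polytope. -/
theorem polytope_of {n : ℤ} [OrderBot α] (hQ : IsAbstractPolytope α n)
    [OrderBot β] (k : ℤ) (hk : -1 ≤ k)
    (htop : ∃ t : β, IsTop t)
    (hcard : ∀ s : Set β, IsMaxChain (· ≤ ·) s → s.ncard = (k + 2).toNat)
    (hIcc : ∀ x z : β, x ≤ z → ∃ x' z' : α, x' ≤ z' ∧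
      Nonempty (↥(Set.Icc x z) ≃o ↥(Set.Icc x' z'))) :
    IsAbstractPolytope β k := by
  refine ⟨hk, htop, hcard, ?_, ?_⟩
  · -- connected
    intro x z hxz hc F G hF1 hF2 hG1 hG2
    obtain ⟨x', z', hx'z', ⟨E⟩⟩ := hIcc x z hxz
    obtain ⟨hbot, htopE⟩ := iccIso_endpoints hxz hx'z' E
    have keyx : ∀ H : ↥(Set.Icc x z), (H : β) = x ↔ ((E H : α) = x') := by
      intro H
      constructor
      · intro h
        have : H = ⟨x, le_rfl, hxz⟩ := Subtype.ext h
        rw [this, hbot]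
      · intro h
        have : E H = ⟨x', le_rfl, hx'z'⟩ := Subtype.ext h
        rw [← hbot] at this
        have := E.injective this
        exact congrArg Subtype.val this
    have keyz : ∀ H : ↥(Set.Icc x z), (H : β) = z ↔ ((E H : α) = z') := by
      intro H
      constructor
      · intro h
        have : H = ⟨z, hxz, le_rfl⟩ := Subtype.ext h
        rw [this, htopE]
      · intro h
        have : E H = ⟨z', hx'z', le_rfl⟩ := Subtype.ext h
        rw [← htopE] at this
        have := E.injective this
        exact congrArg Subtype.val this
    obtain ⟨c, hcmax, hccard⟩ := hc
    have hrel := hQ.connected x' z' hx'z'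
      ⟨(E : _ → _) '' c, isMaxChain_image E hcmax, by rwa [ncard_image_orderIso]⟩
      (E F) (E G)
      ((not_congr (keyx F)).mp hF1) ((not_congr (keyz F)).mp hF2)
      ((not_congr (keyx G)).mp hG1) ((not_congr (keyz G)).mp hG2)
    have hstep : ∀ a b : ↥(Set.Icc x' z'),
        (((a : α) ≠ x' ∧ (a : α) ≠ z' ∧ (b : α) ≠ x' ∧ (b : α) ≠ z') ∧
          ((a : α) ≤ (b : α) ∨ (b : α) ≤ (a : α))) →
        (((E.symm a : β) ≠ x ∧ (E.symm a : β) ≠ z ∧ (E.symm b : β) ≠ x ∧ (E.symm b : β) ≠ z) ∧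
          ((E.symm a : β) ≤ (E.symm b : β) ∨ (E.symm b : β) ≤ (E.symm a : β))) := by
      rintro a b ⟨⟨ha1, ha2, hb1, hb2⟩, hab⟩
      have tx : ∀ w : ↥(Set.Icc x' z'), ((E.symm w : β) = x ↔ (w : α) = x') := by
        intro w
        rw [keyx (E.symm w), E.apply_symm_apply]
      have tz : ∀ w : ↥(Set.Icc x' z'), ((E.symm w : β) = z ↔ (w : α) = z') := by
        intro w
        rw [keyz (E.symm w), E.apply_symm_apply]
      refine ⟨⟨(not_congr (tx a)).mpr ha1, (not_congr (tz a)).mpr ha2,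
        (not_congr (tx b)).mpr hb1, (not_congr (tz b)).mpr hb2⟩, ?_⟩
      rcases hab with h | h
      · exact Or.inl (Subtype.coe_le_coe.mpr (E.symm.monotone (Subtype.coe_le_coe.mp h)))
      · exact Or.inr (Subtype.coe_le_coe.mpr (E.symm.monotone (Subtype.coe_le_coe.mp h)))
    have lifted := Relation.ReflTransGen.lift
      (p := fun a b : ↥(Set.Icc x z) =>
        (((a : β) ≠ x ∧ (a : β) ≠ z ∧ (b : β) ≠ x ∧ (b : β) ≠ z) ∧
          ((a : β) ≤ (b : β) ∨ (b : β) ≤ (a : β))))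
      (E.symm : ↥(Set.Icc x' z') → ↥(Set.Icc x z)) hstep _ _ hrel
    simp only [Function.onFun] at lifted
    rwa [E.symm_apply_apply, E.symm_apply_apply] at lifted
  · -- diamond
    intro x z hxz hall
    obtain ⟨x', z', hx'z', ⟨E⟩⟩ := hIcc x z hxz.le
    obtain ⟨hbot, htopE⟩ := iccIso_endpoints hxz.le hx'z' E
    have hx'ltz' : x' < z' := by
      rcases eq_or_lt_of_le hx'z' with rfl | h
      · exfalso
        have : (⟨x, le_rfl, hxz.le⟩ : ↥(Set.Icc x z)) = ⟨z, hxz.le, le_rfl⟩ :=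
          E.injective (by rw [hbot, htopE])
        exact hxz.ne (congrArg Subtype.val this)
      · exact h
    have hall' : ∀ c : Set ↥(Set.Icc x' z'), IsMaxChain (· ≤ ·) c → c.ncard = 4 := by
      intro c hc
      have := hall ((E.symm : _ → _) '' c) (isMaxChain_image E.symm hc)
      rwa [ncard_image_orderIso] at this
    have hQd := hQ.diamond x' z' hx'ltz' hall'
    set T' : Set ↥(Set.Icc x' z') := {w | x' < (w : α) ∧ (w : α) < z'} with hT'
    have h1 : Subtype.val '' T' = {y : α | x' < y ∧ y < z'} := by
      ext y
      constructor
      · rintro ⟨w, hw, rfl⟩; exact hw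
      · rintro ⟨hy1, hy2⟩
        exact ⟨⟨y, hy1.le, hy2.le⟩, ⟨hy1, hy2⟩, rfl⟩
    have hEsymm_bot : E.symm ⟨x', le_rfl, hx'z'⟩ = ⟨x, le_rfl, hxz.le⟩ := by
      rw [← hbot, E.symm_apply_apply]
    have hEsymm_top : E.symm ⟨z', hx'z', le_rfl⟩ = ⟨z, hxz.le, le_rfl⟩ := by
      rw [← htopE, E.symm_apply_apply]
    have h2 : (fun w : ↥(Set.Icc x' z') => ((E.symm w : ↥(Set.Icc x z)) : β)) '' T' =
        {y : β | x < y ∧ y < z} := by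
      ext y
      constructor
      · rintro ⟨w, ⟨hw1, hw2⟩, rfl⟩
        constructor
        · have : (⟨x', le_rfl, hx'z'⟩ : ↥(Set.Icc x' z')) < w := Subtype.coe_lt_coe.mp hw1
          have := E.symm.strictMono this
          rw [hEsymm_bot] at this
          exact Subtype.coe_lt_coe.mpr this
        · have : w < (⟨z', hx'z', le_rfl⟩ : ↥(Set.Icc x' z')) := Subtype.coe_lt_coe.mp hw2
          have := E.symm.strictMono this
          rw [hEsymm_top] at this
          exact Subtype.coe_lt_coe.mpr this
      · rintro ⟨hy1, hy2⟩
        refine ⟨E ⟨y, hy1.le, hy2.le⟩, ⟨?_, ?_⟩, by simp⟩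
        · have : (⟨x, le_rfl, hxz.le⟩ : ↥(Set.Icc x z)) < ⟨y, hy1.le, hy2.le⟩ :=
            Subtype.coe_lt_coe.mp hy1
          have := E.strictMono this
          rw [hbot] at this
          exact Subtype.coe_lt_coe.mpr this
        · have : (⟨y, hy1.le, hy2.le⟩ : ↥(Set.Icc x z)) < ⟨z, hxz.le, le_rfl⟩ :=
            Subtype.coe_lt_coe.mp hy2
          have := E.strictMono this
          rw [htopE] at this
          exact Subtype.coe_lt_coe.mpr this
    have hinj : Function.Injective
        (fun w : ↥(Set.Icc x' z') => ((E.symm w : ↥(Set.Icc x z)) : β)) :=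
      Subtype.val_injective.comp E.symm.injective
    calc {y : β | x < y ∧ y < z}.ncard
        = T'.ncard := by rw [← h2, Set.ncard_image_of_injective _ hinj]
      _ = {y : α | x' < y ∧ y < z'}.ncard := by
          rw [← h1, Set.ncard_image_of_injective _ Subtype.val_injective]
      _ = 2 := hQd

end Transfer
section Star

variable {Q : Type u} [PartialOrder Q] [OrderBot Q] {n : ℤ}
variable (hQ : IsAbstractPolytope Q n) (hn : 0 ≤ n)
include hQ hn

theorem maxChainOn_Iic_iff {q : Q} {C : Set Q} :
    MaxChainOn (Set.Iic q) C ↔ MaxChainOn (Set.Icc (⊥ : Q) q) C := by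
  rw [Set.Icc_bot]

theorem interval_polytope (q : Q) :
    ∃ k : ℕ, 1 ≤ k ∧ ((⊥ : Q) < q → 2 ≤ k) ∧
      (∀ C, MaxChainOn (Set.Iic q) C → C.ncard = k) ∧
      IsAbstractPolytope ↥(Set.Iic q) ((k : ℤ) - 2) := by
  have hchain : IsChain (· ≤ ·) ({⊥, q} : Set Q) := by
    rintro a (rfl | ha) b (rfl | hb) hne
    · simp at hne
    · simp at hb; subst hb; exact Or.inl bot_le
    · simp at ha; subst ha; exact Or.inr bot_le
    · simp at ha hb; subst ha; subst hb; simp at hne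
  have hsub : ({⊥, q} : Set Q) ⊆ Set.Iic q := by
    rintro a (rfl | ha)
    · exact bot_le
    · simp at ha; subst ha; exact le_rfl
  obtain ⟨C₀, hC₀, hsub₀⟩ := exists_maxChainOn hchain hsub
  have hC₀' := (maxChainOn_Iic_iff hQ hn).mp hC₀
  have hfin : C₀.Finite := (maxChainOn_Icc_card_le hQ hn bot_le hC₀').1
  set k := C₀.ncard with hk
  have hcardAll : ∀ C, MaxChainOn (Set.Iic q) C → C.ncard = k := by
    intro C hC
    exact graded hQ hn bot_le ((maxChainOn_Iic_iff hQ hn).mp hC) hC₀'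
  have hq₀ : q ∈ C₀ := hsub₀ (by simp)
  have hk1 : 1 ≤ k := by
    rw [hk, Nat.one_le_iff_ne_zero]
    intro h0
    rw [(Set.ncard_eq_zero hfin).mp h0] at hq₀
    exact hq₀
  refine ⟨k, hk1, ?_, hcardAll, ?_⟩
  · intro hbq
    have := (Set.one_lt_ncard hfin).mpr ⟨⊥, hsub₀ (by simp), q, hq₀, hbq.ne⟩
    omega
  · refine polytope_of hQ ((k : ℤ) - 2) (by omega) ?_ ?_ ?_
    · exact ⟨⟨q, le_rfl⟩, fun b => b.2⟩
    · intro s hs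
      have h1 := isMaxChain_subtype_iff.mp hs
      have h2 := hcardAll _ h1
      rw [Set.ncard_image_of_injective _ Subtype.val_injective] at h2
      rw [h2]
      omega
    · intro x z hxz
      exact ⟨x.1, z.1, Subtype.coe_le_coe.mpr hxz, ⟨iccSub x z⟩⟩

theorem no_product (hprime : JoinPrime Q)
    {A B : Type u} [PartialOrder A] [OrderBot A] [PartialOrder B] [OrderBot B]
    (e : Q ≃o (A × B)) (hA : ∃ a : A, a ≠ ⊥) (hB : ∃ b : B, b ≠ ⊥) :
    False := by
  obtain ⟨T, hT⟩ := hQ.exists_top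
  have htA : IsTop (e T).1 := by
    intro a
    have h := e.monotone (hT (e.symm (a, (⊥ : B))))
    rw [e.apply_symm_apply] at h
    exact h.1
  have htB : IsTop (e T).2 := by
    intro b
    have h := e.monotone (hT (e.symm ((⊥ : A), b)))
    rw [e.apply_symm_apply] at h
    exact h.2
  have hbot : e ⊥ = ((⊥ : A), (⊥ : B)) := by
    have h := e.monotone (bot_le : (⊥ : Q) ≤ e.symm ((⊥ : A), (⊥ : B)))
    rw [e.apply_symm_apply] at h
    exact le_antisymm h (by constructor <;> exact bot_le)
  set q₁ := e.symm ((e T).1, (⊥ : B)) with hq₁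
  set q₂ := e.symm ((⊥ : A), (e T).2) with hq₂
  have heq₁ : e q₁ = ((e T).1, (⊥ : B)) := by rw [hq₁]; exact e.apply_symm_apply _
  have heq₂ : e q₂ = ((⊥ : A), (e T).2) := by rw [hq₂]; exact e.apply_symm_apply _
  -- the isomorphism ↥(Iic q₁) ≃o A
  have hmemA : ∀ u : ↥(Set.Iic q₁), (e u.1).2 = ⊥ := by
    intro u
    have h := e.monotone u.2
    rw [heq₁] at h
    exact le_antisymm h.2 bot_le
  let EA : ↥(Set.Iic q₁) ≃o A :=
    { toFun := fun u => (e u.1).1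
      invFun := fun a => ⟨e.symm (a, ⊥), by
        rw [hq₁]
        exact e.symm.monotone ⟨htA a, le_rfl⟩⟩
      left_inv := fun u => Subtype.ext (by
        have h : ((e u.1).1, (⊥ : B)) = e u.1 := Prod.ext rfl (hmemA u).symm
        show e.symm ((e u.1).1, ⊥) = u.1
        rw [h, e.symm_apply_apply])
      right_inv := fun a => by simp only [e.apply_symm_apply]
      map_rel_iff' := by
        intro u v
        simp only [Equiv.coe_fn_mk]
        constructor
        · intro h
          have h2 : e u.1 ≤ e v.1 := by
            constructor
            · exact h
            · rw [hmemA u]; exact bot_le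
          exact Subtype.coe_le_coe.mp (e.le_iff_le.mp h2)
        · intro h
          exact (e.monotone (Subtype.coe_le_coe.mpr h)).1 }
  have hmemB : ∀ u : ↥(Set.Iic q₂), (e u.1).1 = ⊥ := by
    intro u
    have h := e.monotone u.2
    rw [heq₂] at h
    exact le_antisymm h.1 bot_le
  let EB : ↥(Set.Iic q₂) ≃o B :=
    { toFun := fun u => (e u.1).2
      invFun := fun b => ⟨e.symm (⊥, b), by
        rw [hq₂]
        exact e.symm.monotone ⟨le_rfl, htB b⟩⟩
      left_inv := fun u => Subtype.ext (by
        have h : ((⊥ : A), (e u.1).2) = e u.1 := Prod.ext (hmemB u).symm rfl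
        show e.symm (⊥, (e u.1).2) = u.1
        rw [h, e.symm_apply_apply])
      right_inv := fun b => by simp only [e.apply_symm_apply]
      map_rel_iff' := by
        intro u v
        simp only [Equiv.coe_fn_mk]
        constructor
        · intro h
          have h2 : e u.1 ≤ e v.1 := by
            constructor
            · rw [hmemB u]; exact bot_le
            · exact h
          exact Subtype.coe_le_coe.mp (e.le_iff_le.mp h2)
        · intro h
          exact (e.monotone (Subtype.coe_le_coe.mpr h)).2 }
  -- q₁, q₂ are not ⊥
  have hq₁ne : (⊥ : Q) < q₁ := by
    rcases eq_or_lt_of_le (bot_le : (⊥ : Q) ≤ q₁) with h | h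
    · exfalso
      obtain ⟨a, ha⟩ := hA
      have h2 : ((e T).1, (⊥ : B)) = e ⊥ := by
        rw [h, ← heq₁]
      rw [hbot] at h2
      have hA0 : (e T).1 = ⊥ := congrArg Prod.fst h2
      exact ha (le_antisymm (hA0 ▸ htA a) bot_le)
    · exact h
  have hq₂ne : (⊥ : Q) < q₂ := by
    rcases eq_or_lt_of_le (bot_le : (⊥ : Q) ≤ q₂) with h | h
    · exfalso
      obtain ⟨b, hb⟩ := hB
      have h2 : ((⊥ : A), (e T).2) = e ⊥ := by
        rw [h, ← heq₂]
      rw [hbot] at h2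
      have hB0 : (e T).2 = ⊥ := congrArg Prod.snd h2
      exact hb (le_antisymm (hB0 ▸ htB b) bot_le)
    · exact h
  obtain ⟨k₁, hk₁1, hk₁2, hcard₁, hpoly₁⟩ := interval_polytope hQ hn q₁
  obtain ⟨k₂, hk₂1, hk₂2, hcard₂, hpoly₂⟩ := interval_polytope hQ hn q₂
  have hk₁2' := hk₁2 hq₁ne
  have hk₂2' := hk₂2 hq₂ne
  -- transfer polytope structure to A and B
  have hpolyA : IsAbstractPolytope A ((k₁ : ℤ) - 2) := by
    refine polytope_of hQ ((k₁ : ℤ) - 2) (by omega) ⟨(e T).1, htA⟩ ?_ ?_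
    · intro s hs
      have h1 := isMaxChain_image EA.symm hs
      have h2 := isMaxChain_subtype_iff.mp h1
      have h3 := hcard₁ _ h2
      rw [Set.ncard_image_of_injective _ Subtype.val_injective,
        Set.ncard_image_of_injective _ EA.symm.injective] at h3
      rw [h3]; omega
    · intro x z hxz
      refine ⟨(EA.symm x).1, (EA.symm z).1,
        Subtype.coe_le_coe.mpr (EA.symm.monotone hxz),
        ⟨(iccCongr EA.symm x z).trans (iccSub _ _)⟩⟩
  have hpolyB : IsAbstractPolytope B ((k₂ : ℤ) - 2) := by
    refine polytope_of hQ ((k₂ : ℤ) - 2) (by omega) ⟨(e T).2, htB⟩ ?_ ?_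
    · intro s hs
      have h1 := isMaxChain_image EB.symm hs
      have h2 := isMaxChain_subtype_iff.mp h1
      have h3 := hcard₂ _ h2
      rw [Set.ncard_image_of_injective _ Subtype.val_injective,
        Set.ncard_image_of_injective _ EB.symm.injective] at h3
      rw [h3]; omega
    · intro x z hxz
      refine ⟨(EB.symm x).1, (EB.symm z).1,
        Subtype.coe_le_coe.mpr (EB.symm.monotone hxz),
        ⟨(iccCongr EB.symm x z).trans (iccSub _ _)⟩⟩
  exact hprime ⟨BddPoset.mk A, BddPoset.mk B, (k₁ : ℤ) - 2, (k₂ : ℤ) - 2,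
    by omega, by omega, hpolyA, hpolyB, ⟨e⟩⟩

end Star
section Main

variable {Q : Type u} [PartialOrder Q] [OrderBot Q] {n : ℤ} {m : ℕ}

/-- The axis element: `q` in coordinate `i`, `⊥` elsewhere. -/
def ax (i : Fin m) (q : Q) : Fin m → Q := fun j => if j = i then q else ⊥

theorem ax_apply_self (i : Fin m) (q : Q) : ax i q i = q := by simp [ax]

theorem ax_apply_ne {i j : Fin m} (h : j ≠ i) (q : Q) : ax i q j = ⊥ := by simp [ax, h]

theorem ax_le_self (i : Fin m) (v : Fin m → Q) : ax i (v i) ≤ v := by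
  intro j
  by_cases h : j = i
  · subst h; rw [ax_apply_self]
  · rw [ax_apply_ne h]; exact bot_le

theorem ax_mono {i : Fin m} {q q' : Q} (h : q ≤ q') : ax i q ≤ ax i q' := by
  intro j
  by_cases hj : j = i
  · subst hj; rw [ax_apply_self, ax_apply_self]; exact h
  · rw [ax_apply_ne hj, ax_apply_ne hj]

theorem le_ax_iff {i : Fin m} {r : Q} {v : Fin m → Q} :
    v ≤ ax i r ↔ v i ≤ r ∧ ∀ j, j ≠ i → v j = ⊥ := by
  constructor
  · intro h
    refine ⟨by have := h i; rwa [ax_apply_self] at this, fun j hj => ?_⟩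
    have := h j
    rw [ax_apply_ne hj] at this
    exact le_antisymm this bot_le
  · rintro ⟨h1, h2⟩ j
    by_cases hj : j = i
    · subst hj; rwa [ax_apply_self]
    · rw [h2 j hj]; exact bot_le

/-- `Iic` transported along an order isomorphism. -/
def iicMap {α β : Type*} [Preorder α] [Preorder β] (e : α ≃o β) (x : α) :
    ↥(Set.Iic x) ≃o ↥(Set.Iic (e x)) where
  toFun u := ⟨e u.1, e.monotone u.2⟩
  invFun w := ⟨e.symm w.1, by
    have := e.symm.monotone w.2
    rwa [e.symm_apply_apply] at this⟩
  left_inv u := Subtype.ext (e.symm_apply_apply _)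
  right_inv w := Subtype.ext (e.apply_symm_apply _)
  map_rel_iff' := by
    intro u v
    simp only [Equiv.coe_fn_mk, Subtype.mk_le_mk, OrderIso.le_iff_le]
    exact ⟨fun h => (show (u : α) ≤ v from e.le_iff_le.mp (show e u.1 ≤ e v.1 from h)),
      fun h => (show e u.1 ≤ e v.1 from e.monotone (show u.1 ≤ v.1 from h))⟩

variable (T : Q) (hT : IsTop T)

/-- The interval below an axis top is isomorphic to `Q`. -/
def projIso (i : Fin m) : ↥(Set.Iic (ax i T)) ≃o Q where
  toFun v := v.1 i
  invFun q := ⟨ax i q, ax_mono (hT q)⟩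
  left_inv v := Subtype.ext (by
    show ax i (v.1 i) = v.1
    funext j
    by_cases h : j = i
    · subst h; rw [ax_apply_self]
    · rw [ax_apply_ne h]
      have := (le_ax_iff.mp v.2).2 j h
      exact this.symm)
  right_inv q := ax_apply_self i q
  map_rel_iff' := by
    intro v w
    simp only [Equiv.coe_fn_mk]
    constructor
    · intro h j
      by_cases hj : j = i
      · subst hj; exact h
      · rw [(le_ax_iff.mp v.2).2 j hj]; exact bot_le
    · intro h; exact h i

/-- Splitting off one coordinate of an interval in a product. -/
def splitIso (w : Fin m → Q) (j₀ : Fin m) :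
    ↥(Set.Iic w) ≃o (↥(Set.Iic (w j₀)) × ↥(Set.Iic (Function.update w j₀ ⊥))) where
  toFun v := (⟨v.1 j₀, v.2 j₀⟩, ⟨Function.update v.1 j₀ ⊥, by
    intro j
    by_cases h : j = j₀
    · subst h; rw [Function.update_self, Function.update_self]
    · rw [Function.update_of_ne h, Function.update_of_ne h]; exact v.2 j⟩)
  invFun p := ⟨Function.update (p.2 : Fin m → Q) j₀ (p.1 : Q), by
    intro j
    by_cases h : j = j₀
    · subst h; rw [Function.update_self]; exact p.1.2
    · rw [Function.update_of_ne h]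
      have := p.2.2 j
      rwa [Function.update_of_ne h] at this⟩
  left_inv v := Subtype.ext (by
    show Function.update (Function.update (v : Fin m → Q) j₀ ⊥) j₀ ((v : Fin m → Q) j₀)
        = (v : Fin m → Q)
    funext j
    by_cases h : j = j₀
    · subst h; rw [Function.update_self]
    · rw [Function.update_of_ne h, Function.update_of_ne h])
  right_inv p := by
    have h1 : (⟨Function.update (p.2 : Fin m → Q) j₀ (p.1 : Q) j₀, by
        rw [Function.update_self]; exact p.1.2⟩ : ↥(Set.Iic (w j₀))) = p.1 := by
      apply Subtype.ext
      show Function.update (p.2 : Fin m → Q) j₀ (p.1 : Q) j₀ = (p.1 : Q)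
      rw [Function.update_self]
    apply Prod.ext
    · apply Subtype.ext
      show Function.update (p.2 : Fin m → Q) j₀ (p.1 : Q) j₀ = (p.1 : Q)
      rw [Function.update_self]
    · apply Subtype.ext
      show Function.update (Function.update (p.2 : Fin m → Q) j₀ (p.1 : Q)) j₀ ⊥
          = (p.2 : Fin m → Q)
      funext j
      by_cases h : j = j₀
      · subst h
        rw [Function.update_self]
        have h2 := p.2.2 j
        rw [Function.update_self] at h2
        exact (le_antisymm h2 bot_le).symm
      · rw [Function.update_of_ne h, Function.update_of_ne h]
  map_rel_iff' := by
    intro v v'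
    simp only [Equiv.coe_fn_mk, Prod.mk_le_mk, Subtype.mk_le_mk]
    constructor
    · rintro ⟨h1, h2⟩ j
      by_cases h : j = j₀
      · subst h; exact h1
      · have : Function.update (v : Fin m → Q) j₀ ⊥ j ≤ Function.update (v' : Fin m → Q) j₀ ⊥ j :=
          h2 j
        rwa [Function.update_of_ne h, Function.update_of_ne h] at this
    · intro h
      refine ⟨h j₀, fun j => ?_⟩
      by_cases hj : j = j₀
      · subst hj
        show Function.update (v : Fin m → Q) j ⊥ j ≤ Function.update (v' : Fin m → Q) j ⊥ j
        rw [Function.update_self]; exact bot_le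
      · show Function.update (v : Fin m → Q) j₀ ⊥ j ≤ Function.update (v' : Fin m → Q) j₀ ⊥ j
        rw [Function.update_of_ne hj, Function.update_of_ne hj]; exact h j

/-- The interval below a single-support element. -/
def singleIso (j : Fin m) (r : Q) : ↥(Set.Iic (ax j r)) ≃o ↥(Set.Iic r) where
  toFun v := ⟨v.1 j, by have := v.2 j; rwa [ax_apply_self] at this⟩
  invFun q := ⟨ax j q.1, ax_mono q.2⟩
  left_inv v := Subtype.ext (by
    show ax j ((v : Fin m → Q) j) = (v : Fin m → Q)
    funext j'
    by_cases h : j' = j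
    · subst h; rw [ax_apply_self]
    · rw [ax_apply_ne h]
      exact ((le_ax_iff.mp v.2).2 j' h).symm)
  right_inv q := Subtype.ext (ax_apply_self j q.1)
  map_rel_iff' := by
    intro v v'
    simp only [Equiv.coe_fn_mk, Subtype.mk_le_mk]
    constructor
    · intro h j'
      by_cases hj : j' = j
      · subst hj; exact h
      · rw [(le_ax_iff.mp v.2).2 j' hj]; exact bot_le
    · intro h; exact h j

variable (hQ : IsAbstractPolytope Q n) (hn : 0 ≤ n)
include hQ hn

include hT in
theorem polyTop_ne_bot : T ≠ ⊥ := by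
  intro h
  obtain ⟨C, hC, -⟩ := exists_maxChainOn (Set.Subsingleton.isChain (by simp) :
    IsChain (· ≤ ·) (∅ : Set Q)) (Set.empty_subset Set.univ)
  have hcard := univ_card hQ hn hC
  have hfin := univ_finite hQ hn hC
  have h2 : 1 < C.ncard := by rw [hcard]; omega
  obtain ⟨a, -, b, -, hab⟩ := (Set.one_lt_ncard hfin).mp h2
  have hall : ∀ x : Q, x = ⊥ := fun x => le_antisymm (h ▸ hT x) bot_le
  exact hab ((hall a).trans (hall b).symm)

include hT

theorem f_ax_top (hprime : JoinPrime Q) (f : (Fin m → Q) ≃o (Fin m → Q)) (i : Fin m) :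
    ∃ j, f (ax i T) = ax j T := by
  set w := f (ax i T) with hw
  have E0 : Q ≃o ↥(Set.Iic w) := (projIso T hT i).symm.trans (iicMap f (ax i T))
  by_cases hsup : ∃ j₀ j₁ : Fin m, j₀ ≠ j₁ ∧ w j₀ ≠ ⊥ ∧ w j₁ ≠ ⊥
  · exfalso
    obtain ⟨j₀, j₁, hne, h0, h1⟩ := hsup
    have E : Q ≃o (↥(Set.Iic (w j₀)) × ↥(Set.Iic (Function.update w j₀ ⊥))) :=
      E0.trans (splitIso w j₀)
    refine no_product hQ hn hprime E ⟨⟨w j₀, Set.self_mem_Iic⟩, ?_⟩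
      ⟨⟨Function.update w j₀ ⊥, Set.self_mem_Iic⟩, ?_⟩
    · intro hcon
      exact h0 (congrArg Subtype.val hcon)
    · intro hcon
      apply h1
      have h2 : Function.update w j₀ ⊥ j₁ = ⊥ := congrFun (congrArg Subtype.val hcon) j₁
      rwa [Function.update_of_ne (Ne.symm hne)] at h2
  · push_neg at hsup
    have hwne : w ≠ ⊥ := by
      intro hcon
      have h3 : ax i T = (⊥ : Fin m → Q) := f.injective (by rw [← hw, hcon, f.map_bot])
      have h4 := congrFun h3 i
      rw [ax_apply_self] at h4
      exact polyTop_ne_bot T hT hQ hn h4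
    obtain ⟨j, hj⟩ : ∃ j, w j ≠ ⊥ := by
      by_contra hcon
      push_neg at hcon
      exact hwne (funext fun j => hcon j)
    have hax : w = ax j (w j) := by
      funext j'
      by_cases h : j' = j
      · subst h; rw [ax_apply_self]
      · rw [ax_apply_ne h]
        by_cases hb : w j' = ⊥
        · exact hb
        · exact absurd (hsup j' j h hb) hj
    have E1 : Q ≃o ↥(Set.Iic (w j)) :=
      E0.trans ((OrderIso.setCongr _ _ (congrArg Set.Iic hax)).trans (singleIso j (w j)))
    have hr : w j = T := by
      by_contra hrne
      have hlt : w j < T := lt_of_le_of_ne (hT _) hrne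
      have hchain : IsChain (· ≤ ·) ({w j, T} : Set Q) := by
        rintro a (rfl | ha) b (rfl | hb) hne2
        · simp at hne2
        · simp at hb; subst hb; exact Or.inl (hT _)
        · simp at ha; subst ha; exact Or.inr (hT _)
        · simp at ha hb; subst ha; subst hb; simp at hne2
      obtain ⟨C, hC, hsubC⟩ := exists_maxChainOn hchain (Set.subset_univ _)
      have hwC : w j ∈ C := hsubC (by simp)
      have hTC : T ∈ C := hsubC (by simp)
      set C' := C ∩ Set.Iic (w j) with hC'def
      have hC' : MaxChainOn (Set.Iic (w j)) C' := by
        refine ⟨Set.inter_subset_right, hC.2.1.mono Set.inter_subset_left, ?_⟩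
        intro u hu hcomp
        refine ⟨?_, hu⟩
        apply hC.2.2 u trivial
        intro v hv
        by_cases hvle : v ≤ w j
        · exact hcomp v ⟨hv, hvle⟩
        · rcases eq_or_ne v (w j) with rfl | hne2
          · exact Or.inl hu
          · rcases hC.2.1 hv hwC hne2 with h' | h'
            · exact absurd h' hvle
            · exact Or.inl (le_trans hu h')
      have hcard' : C'.ncard = (n + 2).toNat := by
        set c : Set ↥(Set.Iic (w j)) := {x | (x : Q) ∈ C'} with hcdef
        have himg : Subtype.val '' c = C' := by
          ext y
          constructor
          · rintro ⟨x, hx, rfl⟩; exact hx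
          · intro hy; exact ⟨⟨y, hy.2⟩, hy, rfl⟩
        have hmax : IsMaxChain (· ≤ ·) c := isMaxChain_subtype_iff.mpr (by rw [himg]; exact hC')
        have h2 := isMaxChain_image E1.symm hmax
        have h3 := hQ.maxChain_card _ h2
        rw [ncard_image_orderIso] at h3
        have h4 : c.ncard = C'.ncard := by
          rw [← himg, Set.ncard_image_of_injective _ Subtype.val_injective]
        rw [← h4]
        exact h3
      have hcardC : C.ncard = (n + 2).toNat := univ_card hQ hn hC
      have hfinC : C.Finite := univ_finite hQ hn hC
      have hTnot : T ∉ C' := by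
        intro hTin
        exact hrne (le_antisymm hTin.2 (hT _)).symm
      have hsub2 : insert T C' ⊆ C := Set.insert_subset hTC Set.inter_subset_left
      have hle2 : (insert T C').ncard ≤ C.ncard := Set.ncard_le_ncard hsub2 hfinC
      rw [Set.ncard_insert_of_notMem hTnot (hfinC.subset Set.inter_subset_left),
        hcard', hcardC] at hle2
      omega
    exact ⟨j, hax.trans (by rw [hr])⟩

end Main
section Group

variable {Q : Type u} [PartialOrder Q] {m : ℕ}

/-- The wreath element as an order automorphism of `Fin m → Q`. -/
def wrIso (g : Fin m → (Q ≃o Q)) (σ : Equiv.Perm (Fin m)) :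
    (Fin m → Q) ≃o (Fin m → Q) where
  toFun v := fun j => g j (v (σ.symm j))
  invFun v := fun i => (g (σ i)).symm (v (σ i))
  left_inv v := by
    funext i
    simp only [Equiv.symm_apply_apply, OrderIso.symm_apply_apply]
  right_inv v := by
    funext j
    simp only [Equiv.apply_symm_apply, OrderIso.apply_symm_apply]
  map_rel_iff' := by
    intro v v'
    constructor
    · intro h i
      have h2 : (g (σ i)) (v (σ.symm (σ i))) ≤ (g (σ i)) (v' (σ.symm (σ i))) := h (σ i)
      rw [Equiv.symm_apply_apply] at h2
      exact (g (σ i)).le_iff_le.mp h2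
    · intro h j
      exact (g j).monotone (h (σ.symm j))

/-- The canonical homomorphism from the wreath product into `Aut (Fin m → Q)`. -/
def PsiHom (Q : Type u) [PartialOrder Q] (m : ℕ) :
    ((Fin m → (Q ≃o Q)) ⋊[permHom (Fin m) (Q ≃o Q)] Equiv.Perm (Fin m)) →*
      ((Fin m → Q) ≃o (Fin m → Q)) where
  toFun x := wrIso x.left x.right
  map_one' := by
    apply OrderIso.ext
    funext v j
    rfl
  map_mul' x y := by
    apply OrderIso.ext
    funext v j
    rfl

end Group
/-- If `Q` is a join-prime abstract polytope of rank `≥ 0` and `P = Q^{*m}` is the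
`m`-fold join of `Q` with itself (`m ≥ 1`), then `Aut(P)` is the wreath product
`(∏_{i=1}^m Aut(Q)) ⋊ Sym(m)`, with `Sym(m)` permuting the coordinates. -/
theorem aut_join_pow (Q : Type u) [PartialOrder Q] [OrderBot Q] (n : ℤ) (hn : 0 ≤ n)
    (hQ : IsAbstractPolytope Q n) (hprime : JoinPrime Q) (m : ℕ) (hm : 1 ≤ m) :
    Nonempty (((Fin m → Q) ≃o (Fin m → Q)) ≃*
      (Fin m → (Q ≃o Q)) ⋊[permHom (Fin m) (Q ≃o Q)] Equiv.Perm (Fin m)) := by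
  classical
  obtain ⟨T, hT⟩ := hQ.exists_top
  have hTb : T ≠ ⊥ := polyTop_ne_bot T hT hQ hn
  have hinj : Function.Injective (PsiHom Q m) := by
    rw [injective_iff_map_eq_one]
    intro x hx
    have hfun : ∀ v : Fin m → Q, ∀ j, x.left j (v (x.right.symm j)) = v j := by
      intro v j
      have h1 : (PsiHom Q m x) v = v := by rw [hx]; rfl
      exact congrFun h1 j
    have hσ : x.right = 1 := by
      apply Equiv.ext
      intro i
      by_contra hne
      have h1 := hfun (ax i T) (x.right i)
      rw [Equiv.symm_apply_apply] at h1
      rw [ax_apply_self] at h1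
      rw [ax_apply_ne (show x.right i ≠ i from hne)] at h1
      apply hTb
      have h2 := congrArg (x.left (x.right i)).symm h1
      rwa [OrderIso.symm_apply_apply, OrderIso.map_bot] at h2
    have hl : x.left = 1 := by
      funext j
      apply OrderIso.ext
      funext q
      exact hfun (fun _ => q) j
    exact SemidirectProduct.ext (by rw [hl]; rfl) (by rw [hσ]; rfl)
  have hsurj : Function.Surjective (PsiHom Q m) := by
    intro f
    choose σ₀ hσ₀ using fun i => f_ax_top T hT hQ hn hprime f i
    have hinj₀ : Function.Injective σ₀ := by
      intro i i' h
      have h2 : ax i T = ax i' T := f.injective (by rw [hσ₀ i, hσ₀ i', h])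
      by_contra hne
      have h3 := congrFun h2 i
      rw [ax_apply_self, ax_apply_ne (show i ≠ i' from hne)] at h3
      exact hTb h3
    let σ : Equiv.Perm (Fin m) := Equiv.ofBijective σ₀ (Finite.injective_iff_bijective.mp hinj₀)
    have hle : ∀ (i : Fin m) (q : Q), f (ax i q) ≤ ax (σ₀ i) T := by
      intro i q
      have h := f.monotone (ax_mono (hT q) : ax i q ≤ ax i T)
      rwa [hσ₀ i] at h
    have hkey : ∀ (i : Fin m) (q : Q), f (ax i q) = ax (σ₀ i) (f (ax i q) (σ₀ i)) := by
      intro i q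
      funext j
      by_cases h : j = σ₀ i
      · subst h; rw [ax_apply_self]
      · rw [ax_apply_ne h]; exact (le_ax_iff.mp (hle i q)).2 j h
    have hsymmt : ∀ i, f.symm (ax (σ₀ i) T) = ax i T := fun i => by
      rw [← hσ₀ i, f.symm_apply_apply]
    have hle' : ∀ (i : Fin m) (q : Q), f.symm (ax (σ₀ i) q) ≤ ax i T := by
      intro i q
      have h := f.symm.monotone (ax_mono (hT q) : ax (σ₀ i) q ≤ ax (σ₀ i) T)
      rwa [hsymmt i] at h
    have hkey' : ∀ (i : Fin m) (q : Q), f.symm (ax (σ₀ i) q) = ax i (f.symm (ax (σ₀ i) q) i) := by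
      intro i q
      funext j
      by_cases h : j = i
      · subst h; rw [ax_apply_self]
      · rw [ax_apply_ne h]; exact (le_ax_iff.mp (hle' i q)).2 j h
    let g : Fin m → (Q ≃o Q) := fun i =>
      { toFun := fun q => f (ax i q) (σ₀ i)
        invFun := fun q => f.symm (ax (σ₀ i) q) i
        left_inv := fun q => by
          show f.symm (ax (σ₀ i) (f (ax i q) (σ₀ i))) i = q
          rw [← hkey i q, f.symm_apply_apply, ax_apply_self]
        right_inv := fun q => by
          show f (ax i (f.symm (ax (σ₀ i) q) i)) (σ₀ i) = q
          rw [← hkey' i q, f.apply_symm_apply, ax_apply_self]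
        map_rel_iff' := by
          intro q q'
          constructor
          · intro h
            have h2 : f (ax i q) ≤ f (ax i q') := by
              rw [hkey i q, hkey i q']
              exact ax_mono h
            have h3 := f.le_iff_le.mp h2
            have h4 := h3 i
            rwa [ax_apply_self, ax_apply_self] at h4
          · intro h
            exact (f.monotone (ax_mono h)) (σ₀ i) }
    have hgdef : ∀ (i : Fin m) (q : Q), g i q = f (ax i q) (σ₀ i) := fun i q => rfl
    have hform : ∀ v : Fin m → Q, ∀ j, f v j = g (σ.symm j) (v (σ.symm j)) := by
      intro v
      have hWle : ∀ j, g (σ.symm j) (v (σ.symm j)) ≤ f v j := by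
        intro j
        have h1 : f (ax (σ.symm j) (v (σ.symm j))) ≤ f v := f.monotone (ax_le_self _ v)
        have h2 := h1 j
        have hs : σ₀ (σ.symm j) = j := σ.apply_symm_apply j
        have h3 : g (σ.symm j) (v (σ.symm j)) = f (ax (σ.symm j) (v (σ.symm j))) j := by
          rw [hgdef, hs]
        rw [h3]
        exact h2
      have hfle : ∀ j, f v j ≤ g (σ.symm j) (v (σ.symm j)) := by
        set W : Fin m → Q := fun j => g (σ.symm j) (v (σ.symm j)) with hW
        have h1 : ∀ i, ax i (v i) ≤ f.symm W := by
          intro i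
          have h2 : ax (σ₀ i) (g i (v i)) ≤ W := by
            intro j
            by_cases h : j = σ₀ i
            · subst h
              rw [ax_apply_self]
              show g i (v i) ≤ g (σ.symm (σ₀ i)) (v (σ.symm (σ₀ i)))
              have hs : σ.symm (σ₀ i) = i := by
                apply σ.injective
                rw [Equiv.apply_symm_apply]
                rfl
              rw [hs]
            · rw [ax_apply_ne h]; exact bot_le
          have h3 := f.symm.monotone h2
          have h4 : f.symm (ax (σ₀ i) (g i (v i))) = ax i (v i) := by
            rw [hgdef, ← hkey i (v i), f.symm_apply_apply]
          rwa [h4] at h3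
        have h6 : v ≤ f.symm W := by
          intro i
          have h7 := h1 i i
          rwa [ax_apply_self] at h7
        have h8 := f.monotone h6
        rw [f.apply_symm_apply] at h8
        exact fun j => h8 j
      exact fun j => le_antisymm (hfle j) (hWle j)
    refine ⟨⟨fun j => g (σ.symm j), σ⟩, ?_⟩
    apply OrderIso.ext
    funext v
    funext j
    show g (σ.symm j) (v (σ.symm j)) = f v j
    exact (hform v j).symm
  exact ⟨(MulEquiv.ofBijective (PsiHom Q m) ⟨hinj, hsurj⟩).symm⟩
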